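/- Under the rounded binary-tree process with parameter δ ∈ (0,1), let S = Σ_{l ∈ L(root)} score(l) denote the total leaf score and let δ' ≥ 2√δ. Then Var(X_root) ≤ δ·S², and consequently P( |X_root − S| > δ'·S ) ≤ δ/δ'² ≤ 1/4. -/

import Mathlib

open MeasureTheory ProbabilityTheory
open scoped ENNReal

/-- `⌊log_{1+δ} y⌋` as a natural number (for `y ≥ 1` the logarithm is nonnegative). -/
noncomputable def rExp (δ y : ℝ) : ℕ := ⌊Real.logb (1 + δ) y⌋₊

/-- `⌊y⌋_δ = (1+δ)^{⌊log_{1+δ} y⌋}`. -/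
noncomputable def rfloor (δ y : ℝ) : ℝ := (1 + δ) ^ rExp δ y

/-- `⌈y⌉_δ = (1+δ)^{⌈log_{1+δ} y⌉}`. -/
noncomputable def rceil (δ y : ℝ) : ℝ := (1 + δ) ^ (⌈Real.logb (1 + δ) y⌉₊)

/-- The probability `k / (δ(1+δ)^r)` (where `y = (1+δ)^r + k`) that the randomized
rounding rounds up. -/
noncomputable def roundUpProb (δ y : ℝ) : ℝ≥0∞ :=
  ENNReal.ofReal ((y - rfloor δ y) / (δ * rfloor δ y))

/-- The randomized rounding `Round_δ(y)`: equal to `(1+δ)^r` with probability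
`(δ(1+δ)^r − k)/(δ(1+δ)^r)` and to `(1+δ)^{r+1}` with probability `k/(δ(1+δ)^r)`,
where `y = (1+δ)^r + k`, `r = ⌊log_{1+δ} y⌋` and `k ∈ [0, δ(1+δ)^r)`.
(For `δ > 0` and `y ≥ 1` the probability `k/(δ(1+δ)^r)` lies in `[0,1)`, so the
clamping `min · 1` below is vacuous.) -/
noncomputable def roundPMF (δ y : ℝ) : PMF ℝ :=
  (PMF.bernoulli (min (roundUpProb δ y).toNNReal 1) (min_le_right _ _)).map
    (fun b => if b then (1 + δ) ^ (rExp δ y + 1) else rfloor δ y)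

/-- Expectation of a real-valued probability mass function. -/
noncomputable def pmfExp (p : PMF ℝ) : ℝ := ∫ x, x ∂p.toMeasure

/-- Variance of a real-valued probability mass function. -/
noncomputable def pmfVar (p : PMF ℝ) : ℝ := variance (fun x => x) p.toMeasure

/-- A finite rooted binary tree in which every internal node has exactly two children and
every leaf carries a real score. -/
inductive BTree where
  | leaf (score : ℝ)
  | node (l r : BTree)

/-- The list of scores of the leaves of (the subtree rooted at) `t`. -/
def BTree.leafScores : BTree → List ℝ
  | .leaf y => [y]
  | .node l r => l.leafScores ++ r.leafScores

/-- The distribution of the random variable `X_v` of the rounded binary-tree process at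
the root of `t`: at a leaf, `X_l = Round_δ(score(l))`, independently across leaves; at an
internal node `v` with children `v1, v2`, conditioned on `X_{v1}` and `X_{v2}`,
`X_v = Round_δ(X_{v1} + X_{v2})`. -/
noncomputable def treePMF (δ : ℝ) : BTree → PMF ℝ
  | .leaf y => roundPMF δ y
  | .node l r => (treePMF δ l).bind fun x => (treePMF δ r).bind fun y => roundPMF δ (x + y)

/-- `Σ_{g < h} L_g · L_h`, the sum over unordered pairs of distinct positions of a list. -/
noncomputable def pairSum (L : List ℝ) : ℝ :=
  ∑ p ∈ (Finset.range L.length ×ˢ Finset.range L.length).filter (fun p => p.1 < p.2),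
    L.getD p.1 0 * L.getD p.2 0

section Aux

noncomputable def texp (p : PMF ℝ) (f : ℝ → ℝ) : ℝ := ∑' x, (p x).toReal * f x

lemma texp_eq_sum (p : PMF ℝ) (s : Finset ℝ) (hs : p.support ⊆ ↑s) (f : ℝ → ℝ) :
    texp p f = ∑ a ∈ s, (p a).toReal * f a := by
  apply tsum_eq_sum
  intro b hb
  have : p b = 0 := by
    by_contra h
    exact hb (hs (PMF.mem_support_iff p b |>.mpr h))
  simp [this]

lemma sum_toReal_eq_one (p : PMF ℝ) (s : Finset ℝ) (hs : p.support ⊆ ↑s) :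
    ∑ a ∈ s, (p a).toReal = 1 := by
  have h1 : (∑ a ∈ s, p a) = 1 := by
    rw [← PMF.tsum_coe p]
    exact (tsum_eq_sum (fun b hb => by
      by_contra h
      exact hb (hs (PMF.mem_support_iff p b |>.mpr h)))).symm
  have := congrArg ENNReal.toReal h1
  rwa [ENNReal.toReal_sum (fun a _ => (p.apply_lt_top a).ne)] at this

lemma ae_mem_of_support_subset (p : PMF ℝ) (s : Finset ℝ) (hs : p.support ⊆ ↑s) :
    ∀ᵐ x ∂p.toMeasure, x ∈ (s : Set ℝ) := by
  rw [MeasureTheory.ae_iff]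
  refine measure_mono_null (fun x hx => ?_)
    ((PMF.toMeasure_apply_eq_zero_iff (p := p) (s := ((s : Set ℝ))ᶜ) (s.measurableSet.compl)).mpr ?_)
  · simpa using hx
  · rw [Set.disjoint_compl_right_iff_subset]; exact hs

lemma integral_eq_texp (p : PMF ℝ) (s : Finset ℝ) (hs : p.support ⊆ ↑s) (f : ℝ → ℝ) :
    ∫ x, f x ∂p.toMeasure = texp p f := by
  set g : ℝ → ℝ := fun x => ∑ a ∈ s, if x = a then f a else 0 with hg
  have hg_meas : Measurable g := by
    apply Finset.measurable_sum
    intro a _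
    exact Measurable.ite (measurableSet_eq) measurable_const measurable_const
  have hfs : ∀ x ∈ (s : Set ℝ), g x = f x := by
    intro x hx
    simp only [hg]
    rw [Finset.sum_ite_eq s x f]
    rw [Finset.mem_coe] at hx
    simp [hx]
  have hae : f =ᵐ[p.toMeasure] g := by
    filter_upwards [ae_mem_of_support_subset p s hs] with x hx
    exact (hfs x hx).symm
  have hbound : ∀ x, ‖g x‖ ≤ ∑ a ∈ s, |f a| := by
    intro x
    rw [Real.norm_eq_abs]
    refine (Finset.abs_sum_le_sum_abs _ _).trans (Finset.sum_le_sum fun a _ => ?_)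
    split_ifs <;> simp
  have hint : Integrable g p.toMeasure :=
    (integrable_const (∑ a ∈ s, |f a|)).mono' hg_meas.aestronglyMeasurable
      (Filter.Eventually.of_forall hbound)
  rw [integral_congr_ae hae, PMF.integral_eq_tsum _ _ hint]
  apply tsum_congr
  intro a
  rcases eq_or_ne (p a) 0 with h | h
  · simp [h]
  · have ha : a ∈ (s : Set ℝ) := hs (PMF.mem_support_iff p a |>.mpr h)
    rw [smul_eq_mul, hfs a ha]

lemma memℒp_two_of_support_subset (p : PMF ℝ) (s : Finset ℝ) (hs : p.support ⊆ ↑s) :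
    MemLp (fun x : ℝ => x) 2 p.toMeasure := by
  refine MemLp.of_bound measurable_id.aestronglyMeasurable (∑ a ∈ s, |a|) ?_
  filter_upwards [ae_mem_of_support_subset p s hs] with x hx
  rw [Real.norm_eq_abs]
  exact Finset.single_le_sum (f := fun a => |a|) (fun a _ => abs_nonneg a) hx

lemma support_bind_subset (p : PMF ℝ) (q : ℝ → PMF ℝ) (s t : Finset ℝ)
    (hs : p.support ⊆ ↑s) (hq : ∀ a ∈ s, (q a).support ⊆ ↑t) :
    (p.bind q).support ⊆ ↑t := by
  rw [PMF.support_bind]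
  rintro x hx
  simp only [Set.mem_iUnion] at hx
  obtain ⟨a, ha, hxa⟩ := hx
  exact hq a (hs ha) hxa

lemma texp_bind (p : PMF ℝ) (q : ℝ → PMF ℝ) (s t : Finset ℝ)
    (hs : p.support ⊆ ↑s) (hq : ∀ a ∈ s, (q a).support ⊆ ↑t) (f : ℝ → ℝ) :
    texp (p.bind q) f = ∑ a ∈ s, (p a).toReal * texp (q a) f := by
  rw [texp_eq_sum _ t (support_bind_subset p q s t hs hq)]
  have key : ∀ x, ((p.bind q) x).toReal = ∑ a ∈ s, (p a).toReal * ((q a) x).toReal := by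
    intro x
    rw [PMF.bind_apply]
    rw [tsum_eq_sum (s := s) (fun b hb => by
      have : p b = 0 := by
        by_contra h
        exact hb (hs (PMF.mem_support_iff p b |>.mpr h))
      simp [this])]
    rw [ENNReal.toReal_sum (fun a _ => (ENNReal.mul_lt_top (p.apply_lt_top a) ((q a).apply_lt_top x)).ne)]
    simp [ENNReal.toReal_mul]
  simp_rw [key, Finset.sum_mul]
  rw [Finset.sum_comm]
  refine Finset.sum_congr rfl fun a ha => ?_
  rw [texp_eq_sum _ t (hq a ha) f, Finset.mul_sum]
  refine Finset.sum_congr rfl fun x hx => ?_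
  ring

section RFloor
variable {δ y : ℝ} (hδ0 : 0 < δ) (hy : 1 ≤ y)
include hδ0

lemma rfloor_pos : 0 < rfloor δ y := pow_pos (by linarith) _

include hy

lemma rfloor_le : rfloor δ y ≤ y := by
  have hb : (1:ℝ) < 1 + δ := by linarith
  have hlog : 0 ≤ Real.logb (1 + δ) y := Real.logb_nonneg hb hy
  have h1 : ((rExp δ y : ℝ)) ≤ Real.logb (1 + δ) y := by
    exact_mod_cast Nat.floor_le hlog
  calc rfloor δ y = (1 + δ) ^ ((rExp δ y : ℝ)) := (Real.rpow_natCast _ _).symm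
    _ ≤ (1 + δ) ^ Real.logb (1 + δ) y := Real.rpow_le_rpow_of_exponent_le hb.le h1
    _ = y := Real.rpow_logb (by linarith) hb.ne' (by linarith)

lemma lt_rfloor_mul : y < rfloor δ y * (1 + δ) := by
  have hb : (1:ℝ) < 1 + δ := by linarith
  calc y = (1 + δ) ^ Real.logb (1 + δ) y := (Real.rpow_logb (by linarith) hb.ne' (by linarith)).symm
    _ < (1 + δ) ^ (((rExp δ y + 1 : ℕ) : ℝ)) := by
        apply Real.rpow_lt_rpow_of_exponent_lt hb
        push_cast
        exact Nat.lt_floor_add_one _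
    _ = (1 + δ) ^ (rExp δ y + 1) := Real.rpow_natCast _ _
    _ = rfloor δ y * (1 + δ) := pow_succ _ _

lemma pow_le_rfloor (m : ℕ) (h : (1 + δ) ^ m ≤ y) : (1 + δ) ^ m ≤ rfloor δ y := by
  have hb : (1:ℝ) < 1 + δ := by linarith
  have h1 : ((m : ℝ)) ≤ Real.logb (1 + δ) y := by
    rw [← Real.rpow_le_rpow_left_iff hb, Real.rpow_logb (by linarith) hb.ne' (by linarith),
      Real.rpow_natCast]
    exact h
  exact pow_le_pow_right₀ hb.le (Nat.le_floor h1)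

end RFloor

section Round
variable {δ y : ℝ} (hδ0 : 0 < δ) (hy : 1 ≤ y)
include hδ0 hy

lemma roundUpProb_lt_one : roundUpProb δ y < 1 := by
  have h2 : (0:ℝ) < rfloor δ y := rfloor_pos hδ0
  have h3 := lt_rfloor_mul hδ0 hy
  rw [roundUpProb, ENNReal.ofReal_lt_one, div_lt_one (by positivity)]
  nlinarith

lemma roundUpProb_toReal : (roundUpProb δ y).toReal = (y - rfloor δ y) / (δ * rfloor δ y) := by
  have h1 := rfloor_le hδ0 hy
  have h2 : (0:ℝ) < rfloor δ y := rfloor_pos hδ0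
  rw [roundUpProb, ENNReal.toReal_ofReal (div_nonneg (by linarith) (mul_pos hδ0 h2).le)]

lemma rfloor_ne_ceil : rfloor δ y ≠ (1 + δ) ^ (rExp δ y + 1) := by
  have h2 : (0:ℝ) < rfloor δ y := rfloor_pos hδ0
  have he : rfloor δ y = (1 + δ) ^ rExp δ y := rfl
  have : rfloor δ y < (1 + δ) ^ (rExp δ y + 1) := by
    rw [pow_succ, ← he]
    nlinarith
  exact this.ne

omit hδ0 hy in
lemma roundPMF_support : (roundPMF δ y).support ⊆
    ↑({rfloor δ y, (1 + δ) ^ (rExp δ y + 1)} : Finset ℝ) := by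
  rw [roundPMF, PMF.support_map]
  rintro x ⟨b, -, rfl⟩
  cases b <;> simp

lemma roundPMF_apply_ceil : roundPMF δ y ((1 + δ) ^ (rExp δ y + 1)) = roundUpProb δ y := by
  rw [roundPMF, PMF.map_apply, tsum_bool]
  rw [if_neg (Ne.symm (by simpa using rfloor_ne_ceil hδ0 hy)), if_pos (by simp)]
  have hr : roundUpProb δ y ≠ ⊤ := ne_top_of_lt (roundUpProb_lt_one hδ0 hy)
  have h1 : (roundUpProb δ y).toNNReal ≤ 1 := by
    rw [← ENNReal.coe_le_coe, ENNReal.coe_toNNReal hr]; exact (roundUpProb_lt_one hδ0 hy).le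
  simp [PMF.bernoulli_apply, min_eq_left h1, ENNReal.coe_toNNReal hr]

lemma roundPMF_apply_floor : roundPMF δ y (rfloor δ y) = 1 - roundUpProb δ y := by
  rw [roundPMF, PMF.map_apply, tsum_bool]
  rw [if_pos (by simp), if_neg (by simpa using rfloor_ne_ceil hδ0 hy)]
  have hr : roundUpProb δ y ≠ ⊤ := ne_top_of_lt (roundUpProb_lt_one hδ0 hy)
  have h1 : (roundUpProb δ y).toNNReal ≤ 1 := by
    rw [← ENNReal.coe_le_coe, ENNReal.coe_toNNReal hr]; exact (roundUpProb_lt_one hδ0 hy).le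
  simp [PMF.bernoulli_apply, min_eq_left h1, ENNReal.coe_toNNReal hr]

lemma round_texp (f : ℝ → ℝ) :
    texp (roundPMF δ y) f =
      (1 - (y - rfloor δ y) / (δ * rfloor δ y)) * f (rfloor δ y) +
      (y - rfloor δ y) / (δ * rfloor δ y) * f (rfloor δ y * (1 + δ)) := by
  rw [texp_eq_sum _ _ (roundPMF_support) f,
    Finset.sum_pair (rfloor_ne_ceil hδ0 hy),
    roundPMF_apply_floor hδ0 hy, roundPMF_apply_ceil hδ0 hy,
    ENNReal.toReal_sub_of_le (roundUpProb_lt_one hδ0 hy).le ENNReal.one_ne_top,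
    roundUpProb_toReal hδ0 hy, ENNReal.toReal_one, pow_succ]
  have he : rfloor δ y = (1 + δ) ^ rExp δ y := rfl
  rw [he]

lemma round_texp_id : texp (roundPMF δ y) (fun x => x) = y := by
  rw [round_texp hδ0 hy]
  have h2 : (0:ℝ) < rfloor δ y := rfloor_pos hδ0
  field_simp
  ring

lemma round_texp_sq : texp (roundPMF δ y) (fun x => x ^ 2) =
    y ^ 2 + (y - rfloor δ y) * (δ * rfloor δ y - (y - rfloor δ y)) := by
  rw [round_texp hδ0 hy]
  have h2 : (0:ℝ) < rfloor δ y := rfloor_pos hδ0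
  field_simp
  ring

lemma round_sq_le_leaf (hδ1 : δ < 1) : texp (roundPMF δ y) (fun x => x ^ 2) ≤
    (1 + δ) * y ^ 2 - δ * (1 - δ) * y ^ 2 := by
  rw [round_texp_sq hδ0 hy]
  have h2 : (0:ℝ) < rfloor δ y := rfloor_pos hδ0
  have h1 := rfloor_le hδ0 hy
  have h3 := lt_rfloor_mul hδ0 hy
  have hK1 : y - rfloor δ y ≤ δ * y := by nlinarith
  have hK0 : 0 ≤ y - rfloor δ y := by linarith
  have hD1 : δ * rfloor δ y - (y - rfloor δ y) ≤ δ * y := by nlinarith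
  have h4 : (y - rfloor δ y) * (δ * rfloor δ y - (y - rfloor δ y)) ≤ (δ * y) * (δ * y) :=
    mul_le_mul hK1 hD1 (by nlinarith) (by positivity)
  nlinarith

end Round

lemma round_sq_le_node {δ : ℝ} (hδ0 : 0 < δ) {a b : ℝ} (m n : ℕ)
    (ha : a = (1 + δ) ^ m) (hb : b = (1 + δ) ^ n) :
    texp (roundPMF δ (a + b)) (fun x => x ^ 2) ≤ (a + b) ^ 2 + 2 * δ * (a * b) := by
  have hbase : (1:ℝ) ≤ 1 + δ := by linarith
  have ha1 : 1 ≤ a := ha ▸ one_le_pow₀ hbase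
  have hb1 : 1 ≤ b := hb ▸ one_le_pow₀ hbase
  have hy : 1 ≤ a + b := by linarith
  rw [round_texp_sq hδ0 hy]
  have hF0 : (0:ℝ) < rfloor δ (a + b) := rfloor_pos hδ0
  have hFle := rfloor_le hδ0 hy
  have hlt := lt_rfloor_mul hδ0 hy
  have hmin : a + b - rfloor δ (a + b) ≤ min a b := by
    rcases le_total m n with hmn | hmn
    · have hab : a ≤ b := by rw [ha, hb]; exact pow_le_pow_right₀ hbase hmn
      have hbF : (1 + δ) ^ n ≤ rfloor δ (a + b) :=
        pow_le_rfloor hδ0 hy n (by rw [← hb]; linarith)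
      rw [min_eq_left hab]; linarith [hb.le, hb.ge]
    · have hab : b ≤ a := by rw [ha, hb]; exact pow_le_pow_right₀ hbase hmn
      have haF : (1 + δ) ^ m ≤ rfloor δ (a + b) :=
        pow_le_rfloor hδ0 hy m (by rw [← ha]; linarith)
      rw [min_eq_right hab]; linarith [ha.le, ha.ge]
  have hK0 : 0 ≤ a + b - rfloor δ (a + b) := by linarith
  have hD0 : 0 ≤ δ * rfloor δ (a + b) - (a + b - rfloor δ (a + b)) := by nlinarith
  have hD1 : δ * rfloor δ (a + b) - (a + b - rfloor δ (a + b)) ≤ δ * (a + b) := by nlinarith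
  have h3 : (a + b - rfloor δ (a + b)) * (δ * rfloor δ (a + b) - (a + b - rfloor δ (a + b)))
      ≤ min a b * (δ * (a + b)) :=
    mul_le_mul hmin hD1 hD0 (le_trans hK0 hmin)
  have h2 : min a b * (a + b) ≤ 2 * (a * b) := by
    rcases le_total a b with hab | hab
    · rw [min_eq_left hab]; nlinarith
    · rw [min_eq_right hab]; nlinarith
  have h4 : δ * (min a b * (a + b)) ≤ δ * (2 * (a * b)) :=
    mul_le_mul_of_nonneg_left h2 hδ0.le
  nlinarith

lemma leafScores_sum_ge_one : ∀ (t : BTree), (∀ y ∈ t.leafScores, 1 ≤ y) →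
    1 ≤ t.leafScores.sum := by
  intro t
  induction t with
  | leaf y =>
    intro h
    simpa [BTree.leafScores] using h y (by simp [BTree.leafScores])
  | node l r ihl ihr =>
    intro h
    have hl := ihl (fun y hy => h y (by simp [BTree.leafScores, hy]))
    have hr := ihr (fun y hy => h y (by simp [BTree.leafScores, hy]))
    simp only [BTree.leafScores, List.sum_append]
    linarith

end Aux

lemma tree_bound {δ : ℝ} (hδ0 : 0 < δ) (hδ1 : δ < 1) :
    ∀ t : BTree, (∀ y ∈ t.leafScores, 1 ≤ y) →
    ∃ s : Finset ℝ, (treePMF δ t).support ⊆ ↑s ∧ (∀ x ∈ s, ∃ n : ℕ, x = (1 + δ) ^ n) ∧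
      texp (treePMF δ t) (fun x => x) = t.leafScores.sum ∧
      texp (treePMF δ t) (fun x => x ^ 2) ≤
        (1 + δ) * t.leafScores.sum ^ 2 -
          δ * (1 - δ) * ((t.leafScores.map (fun z => z ^ 2)).sum) := by
  intro t
  induction t with
  | leaf y =>
    intro h
    have hy : 1 ≤ y := h y (by simp [BTree.leafScores])
    have htree : treePMF δ (BTree.leaf y) = roundPMF δ y := rfl
    refine ⟨{rfloor δ y, (1 + δ) ^ (rExp δ y + 1)}, ?_, ?_, ?_, ?_⟩
    · rw [htree]; exact roundPMF_support
    · intro x hx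
      rcases Finset.mem_insert.mp hx with rfl | hx
      · exact ⟨rExp δ y, rfl⟩
      · exact ⟨rExp δ y + 1, Finset.mem_singleton.mp hx⟩
    · rw [htree, round_texp_id hδ0 hy]
      simp [BTree.leafScores]
    · rw [htree]
      have := round_sq_le_leaf hδ0 hy hδ1
      simpa [BTree.leafScores] using this
  | node l r ihl ihr =>
    intro h
    obtain ⟨sl, hsl, hpl, hEl, hMl⟩ := ihl (fun y hy => h y (by simp [BTree.leafScores, hy]))
    obtain ⟨sr, hsr, hpr, hEr, hMr⟩ := ihr (fun y hy => h y (by simp [BTree.leafScores, hy]))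
    have hbase : (1:ℝ) ≤ 1 + δ := by linarith
    have honel : ∀ x ∈ sl, 1 ≤ x := fun x hx => by
      obtain ⟨n, rfl⟩ := hpl x hx; exact one_le_pow₀ hbase
    have honer : ∀ x ∈ sr, 1 ≤ x := fun x hx => by
      obtain ⟨n, rfl⟩ := hpr x hx; exact one_le_pow₀ hbase
    classical
    set s : Finset ℝ := ((sl ×ˢ sr).image fun ab => rfloor δ (ab.1 + ab.2)) ∪
      ((sl ×ˢ sr).image fun ab => (1 + δ) ^ (rExp δ (ab.1 + ab.2) + 1)) with hs_def
    have hpow : ∀ x ∈ s, ∃ n : ℕ, x = (1 + δ) ^ n := by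
      intro x hx
      rw [hs_def, Finset.mem_union] at hx
      rcases hx with hx | hx <;> obtain ⟨ab, -, rfl⟩ := Finset.mem_image.mp hx
      · exact ⟨rExp δ (ab.1 + ab.2), rfl⟩
      · exact ⟨rExp δ (ab.1 + ab.2) + 1, rfl⟩
    have hsub1 : ∀ a ∈ sl, ∀ b ∈ sr, (roundPMF δ (a + b)).support ⊆ ↑s := by
      intro a ha b hb
      refine (roundPMF_support).trans ?_
      intro x hx
      simp only [Finset.coe_insert, Finset.coe_singleton, Set.mem_insert_iff,
        Set.mem_singleton_iff] at hx
      rcases hx with rfl | rfl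
      · exact Finset.mem_coe.mpr (Finset.mem_union_left _
          (Finset.mem_image.mpr ⟨(a, b), Finset.mem_product.mpr ⟨ha, hb⟩, rfl⟩))
      · exact Finset.mem_coe.mpr (Finset.mem_union_right _
          (Finset.mem_image.mpr ⟨(a, b), Finset.mem_product.mpr ⟨ha, hb⟩, rfl⟩))
    have hsubQ : ∀ a ∈ sl, ((treePMF δ r).bind fun b => roundPMF δ (a + b)).support ⊆ ↑s :=
      fun a ha => support_bind_subset _ _ sr s hsr (fun b hb => hsub1 a ha b hb)
    have htree : treePMF δ (BTree.node l r) =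
        (treePMF δ l).bind (fun x => (treePMF δ r).bind fun y => roundPMF δ (x + y)) := rfl
    have hsupp : (treePMF δ (BTree.node l r)).support ⊆ ↑s := by
      rw [htree]; exact support_bind_subset _ _ sl s hsl hsubQ
    have hmassl := sum_toReal_eq_one _ _ hsl
    have hmassr := sum_toReal_eq_one _ _ hsr
    have hSl : ∑ a ∈ sl, ((treePMF δ l) a).toReal * a = l.leafScores.sum := by
      rw [← texp_eq_sum _ _ hsl (fun x => x)]; exact hEl
    have hSr : ∑ b ∈ sr, ((treePMF δ r) b).toReal * b = r.leafScores.sum := by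
      rw [← texp_eq_sum _ _ hsr (fun x => x)]; exact hEr
    have hQl : ∑ a ∈ sl, ((treePMF δ l) a).toReal * a ^ 2 =
        texp (treePMF δ l) (fun x => x ^ 2) := (texp_eq_sum _ _ hsl _).symm
    have hQr : ∑ b ∈ sr, ((treePMF δ r) b).toReal * b ^ 2 =
        texp (treePMF δ r) (fun x => x ^ 2) := (texp_eq_sum _ _ hsr _).symm
    have hE : texp (treePMF δ (BTree.node l r)) (fun x => x) =
        l.leafScores.sum + r.leafScores.sum := by
      rw [htree, texp_bind _ _ sl s hsl hsubQ]
      have hinner : ∀ a ∈ sl, ((treePMF δ l) a).toReal *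
          texp ((treePMF δ r).bind fun b => roundPMF δ (a + b)) (fun x => x) =
          ((treePMF δ l) a).toReal * (a + r.leafScores.sum) := by
        intro a ha
        congr 1
        rw [texp_bind _ _ sr s hsr (fun b hb => hsub1 a ha b hb)]
        have h1 : ∀ b ∈ sr, ((treePMF δ r) b).toReal *
            texp (roundPMF δ (a + b)) (fun x => x) =
            a * ((treePMF δ r) b).toReal + ((treePMF δ r) b).toReal * b := by
          intro b hb
          rw [round_texp_id hδ0 (by have := honel a ha; have := honer b hb; linarith)]
          ring
        rw [Finset.sum_congr rfl h1, Finset.sum_add_distrib, ← Finset.mul_sum, hmassr, hSr,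
          mul_one]
      rw [Finset.sum_congr rfl hinner]
      have h2 : ∀ a ∈ sl, ((treePMF δ l) a).toReal * (a + r.leafScores.sum) =
          ((treePMF δ l) a).toReal * a + r.leafScores.sum * ((treePMF δ l) a).toReal :=
        fun a _ => by ring
      rw [Finset.sum_congr rfl h2, Finset.sum_add_distrib, ← Finset.mul_sum, hmassl, hSl,
        mul_one]
    have hM : texp (treePMF δ (BTree.node l r)) (fun x => x ^ 2) ≤
        texp (treePMF δ l) (fun x => x ^ 2) + texp (treePMF δ r) (fun x => x ^ 2) +
          2 * (1 + δ) * (l.leafScores.sum * r.leafScores.sum) := by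
      rw [htree, texp_bind _ _ sl s hsl hsubQ]
      have hinner : ∀ a ∈ sl, ((treePMF δ l) a).toReal *
          texp ((treePMF δ r).bind fun b => roundPMF δ (a + b)) (fun x => x ^ 2) ≤
          ((treePMF δ l) a).toReal * (texp (treePMF δ r) (fun x => x ^ 2) +
            2 * (1 + δ) * r.leafScores.sum * a + a ^ 2) := by
        intro a ha
        refine mul_le_mul_of_nonneg_left ?_ ENNReal.toReal_nonneg
        rw [texp_bind _ _ sr s hsr (fun b hb => hsub1 a ha b hb)]
        obtain ⟨m, ham⟩ := hpl a ha
        calc ∑ b ∈ sr, ((treePMF δ r) b).toReal * texp (roundPMF δ (a + b)) (fun x => x ^ 2)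
            ≤ ∑ b ∈ sr, ((treePMF δ r) b).toReal * ((a + b) ^ 2 + 2 * δ * (a * b)) := by
              refine Finset.sum_le_sum fun b hb => ?_
              obtain ⟨n, hbn⟩ := hpr b hb
              exact mul_le_mul_of_nonneg_left (round_sq_le_node hδ0 m n ham hbn)
                ENNReal.toReal_nonneg
          _ = texp (treePMF δ r) (fun x => x ^ 2) + 2 * (1 + δ) * r.leafScores.sum * a
              + a ^ 2 := by
              have h1 : ∀ b ∈ sr, ((treePMF δ r) b).toReal * ((a + b) ^ 2 + 2 * δ * (a * b)) =
                  ((treePMF δ r) b).toReal * b ^ 2 +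
                  (2 * (1 + δ) * a) * (((treePMF δ r) b).toReal * b) +
                  a ^ 2 * ((treePMF δ r) b).toReal := fun b _ => by ring
              rw [Finset.sum_congr rfl h1, Finset.sum_add_distrib, Finset.sum_add_distrib,
                ← Finset.mul_sum, ← Finset.mul_sum, hmassr, hSr, hQr]
              ring
      calc ∑ a ∈ sl, ((treePMF δ l) a).toReal *
            texp ((treePMF δ r).bind fun b => roundPMF δ (a + b)) (fun x => x ^ 2)
          ≤ ∑ a ∈ sl, ((treePMF δ l) a).toReal * (texp (treePMF δ r) (fun x => x ^ 2) +
              2 * (1 + δ) * r.leafScores.sum * a + a ^ 2) := Finset.sum_le_sum hinner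
        _ = texp (treePMF δ l) (fun x => x ^ 2) + texp (treePMF δ r) (fun x => x ^ 2) +
              2 * (1 + δ) * (l.leafScores.sum * r.leafScores.sum) := by
            have h1 : ∀ a ∈ sl, ((treePMF δ l) a).toReal *
                (texp (treePMF δ r) (fun x => x ^ 2) +
                  2 * (1 + δ) * r.leafScores.sum * a + a ^ 2) =
                texp (treePMF δ r) (fun x => x ^ 2) * ((treePMF δ l) a).toReal +
                (2 * (1 + δ) * r.leafScores.sum) * (((treePMF δ l) a).toReal * a) +
                ((treePMF δ l) a).toReal * a ^ 2 := fun a _ => by ring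
            rw [Finset.sum_congr rfl h1, Finset.sum_add_distrib, Finset.sum_add_distrib,
              ← Finset.mul_sum, ← Finset.mul_sum, hmassl, hSl, hQl]
            ring
    refine ⟨s, hsupp, hpow, ?_, ?_⟩
    · rw [hE]; simp [BTree.leafScores]
    · have hsum : (BTree.node l r).leafScores.sum = l.leafScores.sum + r.leafScores.sum := by
        simp [BTree.leafScores]
      have hq : ((BTree.node l r).leafScores.map (fun z => z ^ 2)).sum =
          (l.leafScores.map (fun z => z ^ 2)).sum + (r.leafScores.map (fun z => z ^ 2)).sum := by
        simp [BTree.leafScores]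
      rw [hsum, hq]
      nlinarith [hM, hMl, hMr]

/-- Under the rounded binary-tree process with parameter `δ ∈ (0,1)`,
with `S = Σ_{l ∈ L(root)} score(l)` the total leaf score and `δ' ≥ 2√δ`:
`Var(X_root) ≤ δ·S²`, and consequently `P(|X_root − S| > δ'·S) ≤ δ/δ'² ≤ 1/4`. -/
theorem treePMF_concentration (δ δ' : ℝ) (hδ0 : 0 < δ) (hδ1 : δ < 1)
    (hδ' : 2 * Real.sqrt δ ≤ δ') (t : BTree) (hscores : ∀ y ∈ t.leafScores, 1 ≤ y) :
    pmfVar (treePMF δ t) ≤ δ * t.leafScores.sum ^ 2 ∧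
    (treePMF δ t).toMeasure {x | δ' * t.leafScores.sum < |x - t.leafScores.sum|} ≤
      ENNReal.ofReal (δ / δ' ^ 2) ∧
    δ / δ' ^ 2 ≤ 1 / 4 := by
  obtain ⟨s, hsupp, hpow, hE, hM⟩ := tree_bound hδ0 hδ1 t hscores
  have hS1 : 1 ≤ t.leafScores.sum := leafScores_sum_ge_one t hscores
  have hQ0 : 0 ≤ (t.leafScores.map (fun z => z ^ 2)).sum := by
    apply List.sum_nonneg
    intro x hx
    obtain ⟨y, -, rfl⟩ := List.mem_map.mp hx
    positivity
  have hmem : MemLp (fun x : ℝ => x) 2 (treePMF δ t).toMeasure :=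
    memℒp_two_of_support_subset _ s hsupp
  have hEint : ∫ x, x ∂(treePMF δ t).toMeasure = t.leafScores.sum := by
    rw [integral_eq_texp _ s hsupp]; exact hE
  have hvar : pmfVar (treePMF δ t) =
      texp (treePMF δ t) (fun x => x ^ 2) - t.leafScores.sum ^ 2 := by
    rw [pmfVar, variance_eq_sub hmem]
    congr 1
    · rw [← integral_eq_texp _ s hsupp (fun x => x ^ 2)]
      apply integral_congr_ae
      filter_upwards with x
      simp [Pi.pow_apply]
    · rw [hEint]
  have hvarle : pmfVar (treePMF δ t) ≤ δ * t.leafScores.sum ^ 2 := by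
    rw [hvar]
    have hda : 0 ≤ δ * (1 - δ) * (t.leafScores.map (fun z => z ^ 2)).sum :=
      mul_nonneg (mul_nonneg hδ0.le (by linarith)) hQ0
    nlinarith [hM]
  have hsqrt : 0 < Real.sqrt δ := Real.sqrt_pos.mpr hδ0
  have hδ'0 : 0 < δ' := lt_of_lt_of_le (by linarith) hδ'
  have h4 : 4 * δ ≤ δ' ^ 2 := by
    have h := pow_le_pow_left₀ (by positivity) hδ' 2
    rw [mul_pow, Real.sq_sqrt hδ0.le] at h
    nlinarith
  refine ⟨hvarle, ?_, ?_⟩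
  · have hc : 0 < δ' * t.leafScores.sum := mul_pos hδ'0 (by linarith)
    have hcheb := meas_ge_le_variance_div_sq (μ := (treePMF δ t).toMeasure) hmem hc
    refine le_trans (measure_mono ?_) (le_trans hcheb ?_)
    · intro x hx
      simp only [Set.mem_setOf_eq] at hx ⊢
      rw [hEint]
      exact le_of_lt hx
    · apply ENNReal.ofReal_le_ofReal
      have hvv : variance (fun x : ℝ => x) (treePMF δ t).toMeasure = pmfVar (treePMF δ t) := rfl
      rw [hvv]
      have h2 : (δ * t.leafScores.sum ^ 2) / (δ' * t.leafScores.sum) ^ 2 = δ / δ' ^ 2 := by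
        rw [mul_pow]
        rw [mul_div_mul_right]
        positivity
      calc pmfVar (treePMF δ t) / (δ' * t.leafScores.sum) ^ 2
          ≤ (δ * t.leafScores.sum ^ 2) / (δ' * t.leafScores.sum) ^ 2 := by gcongr
        _ = δ / δ' ^ 2 := h2
  · rw [div_le_iff₀ (by positivity : (0:ℝ) < δ' ^ 2)]
    linarith
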